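/- For every integer m ≥ 1 and every s ∈ [0,1], B_m(s) ≤ 3 + μ·√m. -/

import Mathlib

open Real MeasureTheory Finset

/-- Density of the standard normal distribution. -/
noncomputable def stdPdf (x : ℝ) : ℝ := Real.exp (-x ^ 2 / 2) / Real.sqrt (2 * Real.pi)

/-- Cumulative distribution function of the standard normal distribution. -/
noncomputable def stdCdf (x : ℝ) : ℝ := ∫ t in Set.Iic x, stdPdf t

/-- The Mills ratio. -/
noncomputable def mills (x : ℝ) : ℝ := (1 - stdCdf x) / stdPdf x

/-- The function `f(x) = x - x² M(x)`. -/
noncomputable def fMills (x : ℝ) : ℝ := x - x ^ 2 * mills x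

/-- `μ`, the supremum of `f` over `[0, ∞)`. -/
noncomputable def muMills : ℝ := sSup (fMills '' Set.Ici 0)

/-- The probability simplex. -/
def probSimplex (n : ℕ) : Set (Fin n → ℝ) :=
  {p | (∀ i, 0 ≤ p i) ∧ ∑ i, p i = 1}

/-- The positive probability simplex. -/
def probSimplexPos (n : ℕ) : Set (Fin n → ℝ) :=
  {p | (∀ i, 0 < p i) ∧ ∑ i, p i = 1}

/-- Expected number of connected components of Ross's random graph. -/
noncomputable def EC {n : ℕ} (p : Fin n → ℝ) : ℝ :=
  ∑ S ∈ (Finset.univ : Finset (Fin n)).powerset.filter (fun S => S.Nonempty),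
    (S.card - 1).factorial * ∏ j ∈ S, p j

/-- The total variation distance. -/
noncomputable def TV {n : ℕ} (p q : Fin n → ℝ) : ℝ := (∑ i, |p i - q i|) / 2

/-- The decreasing rearrangement of a vector. -/
noncomputable def decRearrange {n : ℕ} (x : Fin n → ℝ) : Fin n → ℝ :=
  fun j => x (Tuple.sort x j.rev)

/-- `Majorizes x y` means `x ≻ y`. -/
def Majorizes {n : ℕ} (x y : Fin n → ℝ) : Prop :=
  (∀ k : ℕ, ∑ j ∈ Finset.univ.filter (fun j : Fin n => (j : ℕ) < k), decRearrange y j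
      ≤ ∑ j ∈ Finset.univ.filter (fun j : Fin n => (j : ℕ) < k), decRearrange x j)
  ∧ ∑ j, x j = ∑ j, y j

/-- The coefficients `c_{k,m}`. -/
noncomputable def ckm (m k : ℕ) : ℝ := (m.choose k) * (k + 1).factorial / (m : ℝ) ^ k

/-- The sum `S_m(s)`. -/
noncomputable def Sm (m : ℕ) (s : ℝ) : ℝ := ∑ k ∈ Finset.Icc 1 m, ckm m k * (1 - s) ^ (k - 1)

/-- The quantity `B_m(s)`. -/
noncomputable def Bm (m : ℕ) (s : ℝ) : ℝ := s * ∑ k ∈ Finset.Icc 1 m, ckm m k * (1 - s) ^ k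

section Aux
open Filter Set

lemma sqrt2pi_pos : 0 < Real.sqrt (2 * Real.pi) := Real.sqrt_pos.2 (by positivity)

lemma stdPdf_pos (x : ℝ) : 0 < stdPdf x := div_pos (exp_pos _) sqrt2pi_pos

lemma stdPdf_eq (x : ℝ) : stdPdf x = (Real.sqrt (2 * Real.pi))⁻¹ * Real.exp (-(2⁻¹ : ℝ) * x ^ 2) := by
  rw [stdPdf]; ring_nf

lemma integrable_stdPdf : Integrable stdPdf := by
  have : Integrable fun x : ℝ => Real.exp (-(2⁻¹ : ℝ) * x ^ 2) := integrable_exp_neg_mul_sq (by norm_num)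
  simpa only [← stdPdf_eq] using this.const_mul (Real.sqrt (2 * Real.pi))⁻¹

lemma integral_stdPdf : ∫ x, stdPdf x = 1 := by
  have h := integral_gaussian (2⁻¹ : ℝ)
  have h2 : (π / 2⁻¹) = 2 * π := by ring
  rw [h2] at h
  have : ∫ x, stdPdf x = (Real.sqrt (2 * Real.pi))⁻¹ * ∫ x, Real.exp (-(2⁻¹:ℝ) * x ^ 2) := by
    rw [← integral_const_mul]; congr 1; ext x; rw [stdPdf_eq]
  rw [this, h, inv_mul_cancel₀ sqrt2pi_pos.ne']

lemma tail_eq (x : ℝ) : ∫ t in Set.Ioi x, stdPdf t = 1 - stdCdf x := by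
  have := intervalIntegral.integral_Iic_add_Ioi (μ := volume) (b := x) integrable_stdPdf.integrableOn integrable_stdPdf.integrableOn
  rw [integral_stdPdf] at this
  rw [stdCdf]; linarith

lemma hasDerivAt_stdPdf (x : ℝ) : HasDerivAt stdPdf (-x * stdPdf x) x := by
  have h1 : HasDerivAt (fun t : ℝ => -t ^ 2 / 2) (-x) x := by
    have := ((hasDerivAt_pow 2 x).neg).div_const 2
    simpa using this.congr_deriv (by push_cast; ring)
  have h2 := (h1.exp).div_const (Real.sqrt (2 * Real.pi))
  refine h2.congr_deriv ?_
  unfold stdPdf; ring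

lemma continuous_stdPdf : Continuous stdPdf := by
  unfold stdPdf; fun_prop

lemma tendsto_stdPdf_atTop : Tendsto stdPdf atTop (nhds 0) := by
  have h1 : Tendsto (fun x : ℝ => -x ^ 2 / 2) atTop atBot := by
    apply Tendsto.atBot_div_const (by norm_num)
    exact (tendsto_neg_atTop_atBot).comp (tendsto_pow_atTop two_ne_zero)
  have h2 := (Real.tendsto_exp_atBot.comp h1).div_const (Real.sqrt (2 * Real.pi))
  unfold stdPdf
  simpa only [Function.comp_def, zero_div] using h2

lemma integrableOn_mul_stdPdf (c : ℝ) (hc : 0 < c) :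
    IntegrableOn (fun t => t * stdPdf t) (Set.Ioi c) := by
  have h0 : IntegrableOn (fun t : ℝ => t ^ (1:ℝ) * Real.exp (-(2⁻¹:ℝ) * t ^ 2)) (Set.Ioi 0) :=
    integrableOn_rpow_mul_exp_neg_mul_sq (by norm_num) (by norm_num)
  have h1 : IntegrableOn (fun t : ℝ => t * Real.exp (-(2⁻¹:ℝ) * t ^ 2)) (Set.Ioi 0) := by
    apply h0.congr_fun _ measurableSet_Ioi
    intro t ht
    simp [Real.rpow_one]
  have h2 : IntegrableOn (fun t : ℝ => t * Real.exp (-(2⁻¹:ℝ) * t ^ 2) * (Real.sqrt (2 * Real.pi))⁻¹) (Set.Ioi c) :=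
    (h1.mono_set (Set.Ioi_subset_Ioi hc.le)).mul_const (Real.sqrt (2 * Real.pi))⁻¹
  apply h2.congr_fun _ measurableSet_Ioi
  intro t ht
  simp only [stdPdf_eq]; ring

lemma integral_mul_stdPdf (c : ℝ) (hc : 0 < c) :
    ∫ t in Set.Ioi c, t * stdPdf t = stdPdf c := by
  have : ∫ t in Set.Ioi c, t * stdPdf t = 0 - (-stdPdf c) := by
    apply integral_Ioi_of_hasDerivAt_of_tendsto' (f := fun t => -stdPdf t)
    · intro t _
      exact (hasDerivAt_stdPdf t).neg.congr_deriv (by ring)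
    · exact integrableOn_mul_stdPdf c hc
    · simpa using tendsto_stdPdf_atTop.neg
  simpa using this

lemma tendsto_tail : Tendsto (fun x => 1 - stdCdf x) atTop (nhds 0) := by
  have hle : ∀ x : ℝ, 1 ≤ x → 1 - stdCdf x ≤ stdPdf x := by
    intro x hx
    rw [← tail_eq, ← integral_mul_stdPdf x (by linarith)]
    apply setIntegral_mono_on integrable_stdPdf.integrableOn
      (integrableOn_mul_stdPdf x (by linarith)) measurableSet_Ioi
    intro t ht
    have ht1 : (1:ℝ) ≤ t := le_of_lt (lt_of_le_of_lt hx ht)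
    nlinarith [stdPdf_pos t]
  have hge : ∀ x : ℝ, 0 ≤ 1 - stdCdf x := by
    intro x
    rw [← tail_eq]
    apply setIntegral_nonneg measurableSet_Ioi
    intro t _; exact (stdPdf_pos t).le
  apply squeeze_zero' (Eventually.of_forall hge)
    (eventually_atTop.2 ⟨1, hle⟩) tendsto_stdPdf_atTop

lemma hasDerivAt_stdCdf (x : ℝ) : HasDerivAt stdCdf (stdPdf x) x := by
  have heq : ∀ y : ℝ, stdCdf y = stdCdf 0 + ∫ t in (0:ℝ)..y, stdPdf t := by
    intro y
    rw [← intervalIntegral.integral_Iic_sub_Iic integrable_stdPdf.integrableOn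
      integrable_stdPdf.integrableOn]
    simp [stdCdf]
  have hd : HasDerivAt (fun y => stdCdf 0 + ∫ t in (0:ℝ)..y, stdPdf t) (stdPdf x) x := by
    apply HasDerivAt.const_add
    exact intervalIntegral.integral_hasDerivAt_right
      integrable_stdPdf.intervalIntegrable
      integrable_stdPdf.aestronglyMeasurable.stronglyMeasurableAtFilter
      continuous_stdPdf.continuousAt
  have : stdCdf = fun y => stdCdf 0 + ∫ t in (0:ℝ)..y, stdPdf t := funext heq
  rw [this]; exact hd

noncomputable def millsF (t : ℝ) : ℝ := t * stdPdf t / (1 + t ^ 2)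
noncomputable def millsF' (t : ℝ) : ℝ := stdPdf t * (1 - 2 * t ^ 2 - t ^ 4) / (1 + t ^ 2) ^ 2

lemma one_add_sq_pos (t : ℝ) : (0:ℝ) < 1 + t ^ 2 := by positivity

lemma hasDerivAt_millsF (t : ℝ) : HasDerivAt millsF (millsF' t) t := by
  have hnum : HasDerivAt (fun u : ℝ => u * stdPdf u) (stdPdf t + t * (-t * stdPdf t)) t :=
    (hasDerivAt_id t).mul (hasDerivAt_stdPdf t) |>.congr_deriv (by simp only [id]; ring)
  have hden : HasDerivAt (fun u : ℝ => 1 + u ^ 2) (2 * t) t := by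
    simpa using ((hasDerivAt_pow 2 t).const_add 1)
  have := hnum.div hden (one_add_sq_pos t).ne'
  refine this.congr_deriv ?_
  unfold millsF'
  congr 1
  ring

lemma continuous_millsF' : Continuous millsF' := by
  apply Continuous.div
  · exact continuous_stdPdf.mul (by fun_prop)
  · fun_prop
  · intro t; positivity

lemma tendsto_millsF_atTop : Tendsto millsF atTop (nhds 0) := by
  apply squeeze_zero' (g := stdPdf)
  · filter_upwards [eventually_ge_atTop (0:ℝ)] with t ht
    unfold millsF
    have := stdPdf_pos t
    positivity
  · filter_upwards [eventually_ge_atTop (0:ℝ)] with t ht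
    unfold millsF
    rw [div_le_iff₀ (one_add_sq_pos t)]
    nlinarith [stdPdf_pos t, sq_nonneg (t - 1)]
  · exact tendsto_stdPdf_atTop

lemma millsF_le_tail (x : ℝ) : millsF x ≤ 1 - stdCdf x := by
  have hint : IntegrableOn (fun t => -millsF' t) (Set.Ioi x) := by
    apply Integrable.mono' integrable_stdPdf.integrableOn
      (continuous_millsF'.neg.aestronglyMeasurable.restrict)
    filter_upwards with t
    rw [Real.norm_eq_abs, Pi.neg_apply, abs_neg]
    unfold millsF'
    rw [abs_div, abs_of_pos (pow_pos (one_add_sq_pos t) 2), div_le_iff₀ (pow_pos (one_add_sq_pos t) 2),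
      abs_mul, abs_of_pos (stdPdf_pos t)]
    have h1 : |1 - 2 * t ^ 2 - t ^ 4| ≤ (1 + t ^ 2) ^ 2 := by
      rw [abs_le]; constructor <;> nlinarith [sq_nonneg t, sq_nonneg (t^2)]
    nlinarith [stdPdf_pos t, abs_nonneg (1 - 2 * t ^ 2 - t ^ 4)]
  have key : ∫ t in Set.Ioi x, -millsF' t = millsF x := by
    have := integral_Ioi_of_hasDerivAt_of_tendsto' (f := fun t => -millsF t)
      (f' := fun t => -millsF' t) (a := x)
      (fun t _ => (hasDerivAt_millsF t).neg) hint (tendsto_millsF_atTop.neg.congr' (by simp))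
    simpa using this
  rw [← key, ← tail_eq]
  apply setIntegral_mono_on hint integrable_stdPdf.integrableOn measurableSet_Ioi
  intro t _
  unfold millsF'
  rw [neg_le, neg_le_iff_add_nonneg]
  have : stdPdf t * (1 - 2 * t ^ 2 - t ^ 4) / (1 + t ^ 2) ^ 2 + stdPdf t
      = stdPdf t * ((1 - 2 * t ^ 2 - t ^ 4) + (1 + t ^ 2) ^ 2) / (1 + t ^ 2) ^ 2 := by
    field_simp
  rw [this]
  have h2 : (0:ℝ) ≤ (1 - 2 * t ^ 2 - t ^ 4) + (1 + t ^ 2) ^ 2 := by nlinarith [sq_nonneg t]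
  exact div_nonneg (mul_nonneg (stdPdf_pos t).le h2) (pow_pos (one_add_sq_pos t) 2).le

lemma fMills_le_one {x : ℝ} (hx : 0 ≤ x) : fMills x ≤ 1 := by
  have h1 := millsF_le_tail x
  have h2 : x / (1 + x ^ 2) ≤ mills x := by
    rw [mills, le_div_iff₀ (stdPdf_pos x)]
    calc x / (1 + x ^ 2) * stdPdf x = millsF x := by unfold millsF; ring
      _ ≤ 1 - stdCdf x := h1
  have h3 : x ^ 2 * (x / (1 + x ^ 2)) ≤ x ^ 2 * mills x :=
    mul_le_mul_of_nonneg_left h2 (sq_nonneg x)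
  have h4 : x - x ^ 2 * (x / (1 + x ^ 2)) = x / (1 + x ^ 2) := by
    field_simp
    ring
  have h5 : x / (1 + x ^ 2) ≤ 1 := by
    rw [div_le_one (one_add_sq_pos x)]
    nlinarith
  unfold fMills
  linarith

lemma bddAbove_fMills : BddAbove (fMills '' Set.Ici 0) := by
  refine ⟨1, fun y hy => ?_⟩
  obtain ⟨x, hx, rfl⟩ := hy
  exact fMills_le_one hx

lemma fMills_le_muMills {a : ℝ} (ha : 0 ≤ a) : fMills a ≤ muMills :=
  le_csSup bddAbove_fMills ⟨a, ha, rfl⟩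

lemma muMills_nonneg : 0 ≤ muMills := by
  have : fMills 0 = 0 := by simp [fMills]
  calc (0:ℝ) = fMills 0 := this.symm
    _ ≤ muMills := fMills_le_muMills le_rfl

section KeyIntegral

variable {a : ℝ}

lemma expquad_tendsto (ha : 0 ≤ a) :
    Tendsto (fun x : ℝ => -Real.exp (-x ^ 2 / 2 - a * x)) atTop (nhds 0) := by
  have h1 : Tendsto (fun x : ℝ => -x ^ 2 / 2 - a * x) atTop atBot := by
    have hg : Tendsto (fun x : ℝ => -x ^ 2 / 2) atTop atBot := by
      apply Tendsto.atBot_div_const (by norm_num)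
      exact (tendsto_neg_atTop_atBot).comp (tendsto_pow_atTop two_ne_zero)
    refine tendsto_atBot_mono' atTop ?_ hg
    filter_upwards [eventually_ge_atTop (0:ℝ)] with x hx
    nlinarith [mul_nonneg ha hx]
  simpa using (Real.tendsto_exp_atBot.comp h1).neg

lemma integrableOn_expquad (ha : 0 ≤ a) :
    IntegrableOn (fun x : ℝ => Real.exp (-x ^ 2 / 2 - a * x)) (Set.Ioi 0) := by
  have hc : Continuous fun x : ℝ => Real.exp (-x ^ 2 / 2 - a * x) := by continuity
  apply Integrable.mono' ((integrable_exp_neg_mul_sq (b := 2⁻¹) (by norm_num)).integrableOn)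
    hc.aestronglyMeasurable.restrict
  filter_upwards [ae_restrict_mem measurableSet_Ioi] with x hx
  rw [Real.norm_eq_abs, abs_of_pos (exp_pos _)]
  apply Real.exp_le_exp.2
  have : 0 ≤ a * x := mul_nonneg ha (le_of_lt hx)
  nlinarith

lemma integrableOn_mul_expquad (ha : 0 ≤ a) :
    IntegrableOn (fun x : ℝ => x * Real.exp (-x ^ 2 / 2 - a * x)) (Set.Ioi 0) := by
  have h1 : IntegrableOn (fun t : ℝ => t * Real.exp (-(2⁻¹:ℝ) * t ^ 2)) (Set.Ioi 0) := by
    apply (integrableOn_rpow_mul_exp_neg_mul_sq (b := 2⁻¹) (by norm_num) (s := 1) (by norm_num)).congr_fun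
      _ measurableSet_Ioi
    intro t ht; simp [Real.rpow_one]
  have hc : Continuous fun x : ℝ => x * Real.exp (-x ^ 2 / 2 - a * x) := by continuity
  apply Integrable.mono' h1 hc.aestronglyMeasurable.restrict
  filter_upwards [ae_restrict_mem measurableSet_Ioi] with x hx
  rw [Real.norm_eq_abs, abs_mul, abs_of_pos hx, abs_of_pos (exp_pos _)]
  apply mul_le_mul_of_nonneg_left _ (le_of_lt hx)
  apply Real.exp_le_exp.2
  have : 0 ≤ a * x := mul_nonneg ha (le_of_lt hx)
  nlinarith

lemma integrableOn_add_mul_expquad (ha : 0 ≤ a) :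
    IntegrableOn (fun x : ℝ => (x + a) * Real.exp (-x ^ 2 / 2 - a * x)) (Set.Ioi 0) := by
  have h2 : IntegrableOn (fun x : ℝ => x * Real.exp (-x ^ 2 / 2 - a * x)
      + a * Real.exp (-x ^ 2 / 2 - a * x)) (Set.Ioi 0) :=
    (integrableOn_mul_expquad ha).add ((integrableOn_expquad ha).const_mul a)
  apply h2.congr_fun _ measurableSet_Ioi
  intro t ht; ring

lemma integral_add_mul_expquad (ha : 0 ≤ a) :
    ∫ x in Set.Ioi 0, (x + a) * Real.exp (-x ^ 2 / 2 - a * x) = 1 := by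
  have := integral_Ioi_of_hasDerivAt_of_tendsto' (a := 0)
    (f := fun x => -Real.exp (-x ^ 2 / 2 - a * x))
    (f' := fun x => (x + a) * Real.exp (-x ^ 2 / 2 - a * x))
    (fun x _ => ?_) (integrableOn_add_mul_expquad ha) (expquad_tendsto ha)
  · simpa using this
  · have hg : HasDerivAt (fun x : ℝ => -x ^ 2 / 2 - a * x) (-x - a) x := by
      have h1 : HasDerivAt (fun x : ℝ => -x ^ 2 / 2) (-x) x :=
        (((hasDerivAt_pow 2 x).neg).div_const 2).congr_deriv (by push_cast; ring)
      have h2 : HasDerivAt (fun y : ℝ => a * y) a x := by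
        simpa using (hasDerivAt_id x).const_mul a
      exact h1.sub h2
    have := (hg.exp).neg
    exact this.congr_deriv (by ring)

lemma integral_expquad (ha : 0 ≤ a) :
    ∫ x in Set.Ioi 0, Real.exp (-x ^ 2 / 2 - a * x)
      = Real.sqrt (2 * Real.pi) * Real.exp (a ^ 2 / 2) * (1 - stdCdf a) := by
  set C := Real.sqrt (2 * Real.pi) * Real.exp (a ^ 2 / 2) with hC
  have hderiv : ∀ x ∈ Set.Ici (0:ℝ), HasDerivAt (fun x => -(C * (1 - stdCdf (x + a))))
      (Real.exp (-x ^ 2 / 2 - a * x)) x := by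
    intro x _
    have h1 : HasDerivAt (fun x : ℝ => stdCdf (x + a)) (stdPdf (x + a)) x := by
      have := (hasDerivAt_stdCdf (x + a)).comp x ((hasDerivAt_id x).add_const a)
      exact this.congr_deriv (mul_one _)
    have h2 := ((h1.const_sub 1).const_mul C).neg
    apply h2.congr_deriv
    calc -(C * -stdPdf (x + a))
        = Real.exp (a ^ 2 / 2) * (Real.exp (-(x + a) ^ 2 / 2) / Real.sqrt (2 * Real.pi)
            * Real.sqrt (2 * Real.pi)) := by rw [hC, stdPdf]; ring
      _ = Real.exp (a ^ 2 / 2) * Real.exp (-(x + a) ^ 2 / 2) := by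
          rw [div_mul_cancel₀ _ sqrt2pi_pos.ne']
      _ = Real.exp (-x ^ 2 / 2 - a * x) := by rw [← Real.exp_add]; congr 1; ring
  have htend : Tendsto (fun x : ℝ => -(C * (1 - stdCdf (x + a)))) atTop (nhds 0) := by
    have h3 : Tendsto (fun x : ℝ => 1 - stdCdf (x + a)) atTop (nhds 0) :=
      tendsto_tail.comp (tendsto_atTop_add_const_right atTop a tendsto_id)
    simpa using (h3.const_mul C).neg
  have := integral_Ioi_of_hasDerivAt_of_tendsto' hderiv (integrableOn_expquad ha) htend
  simpa [hC] using this

lemma mills_eq (x : ℝ) :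
    mills x = Real.sqrt (2 * Real.pi) * Real.exp (x ^ 2 / 2) * (1 - stdCdf x) := by
  rw [mills, stdPdf, div_div_eq_mul_div, neg_div, Real.exp_neg, div_inv_eq_mul]
  ring

lemma integral_mul_expquad (ha : 0 ≤ a) :
    ∫ x in Set.Ioi 0, x * Real.exp (-x ^ 2 / 2 - a * x) = 1 - a * mills a := by
  have hsub : ∀ x : ℝ, x * Real.exp (-x ^ 2 / 2 - a * x)
      = (x + a) * Real.exp (-x ^ 2 / 2 - a * x) - a * Real.exp (-x ^ 2 / 2 - a * x) := by
    intro x; ring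
  rw [setIntegral_congr_fun measurableSet_Ioi (fun x _ => hsub x),
    integral_sub (integrableOn_add_mul_expquad ha) ((integrableOn_expquad ha).const_mul a),
    integral_add_mul_expquad ha, integral_const_mul, integral_expquad ha, mills_eq]

end KeyIntegral

section Scaled

variable {m : ℕ} {s : ℝ}

lemma integrableOn_mul_expquadm (hm : 1 ≤ m) (hs : 0 ≤ s) :
    IntegrableOn (fun x : ℝ => x * Real.exp (-x ^ 2 / (2 * m) - s * x)) (Set.Ioi 0) := by
  have hmpos : (0:ℝ) < 2 * m := by positivity
  have h1 : IntegrableOn (fun t : ℝ => t * Real.exp (-(2 * (m:ℝ))⁻¹ * t ^ 2)) (Set.Ioi 0) := by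
    apply (integrableOn_rpow_mul_exp_neg_mul_sq (b := (2 * (m:ℝ))⁻¹) (by positivity) (s := 1)
      (by norm_num)).congr_fun _ measurableSet_Ioi
    intro t ht; simp [Real.rpow_one]
  have hc : Continuous fun x : ℝ => x * Real.exp (-x ^ 2 / (2 * m) - s * x) := by continuity
  apply Integrable.mono' h1 hc.aestronglyMeasurable.restrict
  filter_upwards [ae_restrict_mem measurableSet_Ioi] with x hx
  rw [Real.norm_eq_abs, abs_mul, abs_of_pos hx, abs_of_pos (exp_pos _)]
  apply mul_le_mul_of_nonneg_left _ (le_of_lt hx)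
  apply Real.exp_le_exp.2
  have h2 : 0 ≤ s * x := mul_nonneg hs (le_of_lt hx)
  rw [div_eq_inv_mul]
  ring_nf
  nlinarith [sq_nonneg x, mul_nonneg (le_of_lt hmpos) (sq_nonneg x)]

lemma integrableOn_expquadm (hm : 1 ≤ m) (hs : 0 ≤ s) :
    IntegrableOn (fun x : ℝ => Real.exp (-x ^ 2 / (2 * m) - s * x)) (Set.Ioi 0) := by
  have hc : Continuous fun x : ℝ => Real.exp (-x ^ 2 / (2 * m) - s * x) := by continuity
  apply Integrable.mono' ((integrable_exp_neg_mul_sq (b := (2 * (m:ℝ))⁻¹)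
    (by positivity)).integrableOn) hc.aestronglyMeasurable.restrict
  filter_upwards [ae_restrict_mem measurableSet_Ioi] with x hx
  rw [Real.norm_eq_abs, abs_of_pos (exp_pos _)]
  apply Real.exp_le_exp.2
  have h2 : 0 ≤ s * x := mul_nonneg hs (le_of_lt hx)
  rw [div_eq_inv_mul]
  ring_nf
  nlinarith

lemma integral_scaled (hm : 1 ≤ m) (hs : 0 ≤ s) :
    s * ∫ x in Set.Ioi 0, x * Real.exp (-x ^ 2 / (2 * m) - s * x)
      = Real.sqrt m * fMills (s * Real.sqrt m) := by
  set r := Real.sqrt (m : ℝ) with hrdef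
  have hr : 0 < r := Real.sqrt_pos.2 (by exact_mod_cast Nat.lt_of_lt_of_le Nat.zero_lt_one hm)
  have hr2 : r ^ 2 = (m : ℝ) := Real.sq_sqrt (Nat.cast_nonneg m)
  set a := s * r with hadef
  have ha : 0 ≤ a := mul_nonneg hs hr.le
  have key := integral_comp_mul_left_Ioi
    (g := fun x => x * Real.exp (-x ^ 2 / (2 * m) - s * x)) 0 hr
  have heq : ∀ x : ℝ, (r * x) * Real.exp (-(r * x) ^ 2 / (2 * m) - s * (r * x))
      = r * (x * Real.exp (-x ^ 2 / 2 - a * x)) := by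
    intro x
    have : -(r * x) ^ 2 / (2 * m) - s * (r * x) = -x ^ 2 / 2 - a * x := by
      rw [← hr2]; field_simp; ring
    rw [this]; ring
  rw [mul_zero] at key
  have key2 : r * ∫ x in Set.Ioi (0:ℝ), x * Real.exp (-x ^ 2 / 2 - a * x)
      = r⁻¹ * ∫ x in Set.Ioi (0:ℝ), x * Real.exp (-x ^ 2 / (2 * m) - s * x) := by
    rw [← integral_const_mul]
    rw [smul_eq_mul] at key
    rw [← key]
    exact setIntegral_congr_fun measurableSet_Ioi (fun x _ => (heq x).symm)
  have key3 : ∫ x in Set.Ioi (0:ℝ), x * Real.exp (-x ^ 2 / (2 * m) - s * x)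
      = (m : ℝ) * (1 - a * mills a) := by
    have h2a := integral_mul_expquad ha
    calc ∫ x in Set.Ioi (0:ℝ), x * Real.exp (-x ^ 2 / (2 * m) - s * x)
        = r * (r⁻¹ * ∫ x in Set.Ioi (0:ℝ), x * Real.exp (-x ^ 2 / (2 * m) - s * x)) := by
          rw [← mul_assoc, mul_inv_cancel₀ hr.ne', one_mul]
      _ = r * (r * ∫ x in Set.Ioi (0:ℝ), x * Real.exp (-x ^ 2 / 2 - a * x)) := by rw [← key2]
      _ = (m:ℝ) * ∫ x in Set.Ioi (0:ℝ), x * Real.exp (-x ^ 2 / 2 - a * x) := by rw [← hr2]; ring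
      _ = (m : ℝ) * (1 - a * mills a) := by rw [h2a]
  rw [key3, fMills]
  have : s * ((m:ℝ) * (1 - a * mills a)) = r * (a * (1 - a * mills a)) := by
    rw [← hr2, hadef]; ring
  rw [this, hadef]
  ring

end Scaled

lemma integral_exp_neg_smul {s : ℝ} (hs : 0 < s) :
    ∫ x in Set.Ioi (0:ℝ), Real.exp (-(s * x)) = 1 / s := by
  have hderiv : ∀ x ∈ Set.Ici (0:ℝ), HasDerivAt (fun x => -Real.exp (-(s * x)) / s)
      (Real.exp (-(s * x))) x := by
    intro x _
    have h1 : HasDerivAt (fun x : ℝ => -(s * x)) (-s) x := by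
      exact ((hasDerivAt_id x).const_mul s).neg.congr_deriv (by ring)
    have := (h1.exp).neg.div_const s
    apply this.congr_deriv
    field_simp
  have htend : Tendsto (fun x : ℝ => -Real.exp (-(s * x)) / s) atTop (nhds 0) := by
    have h1 : Tendsto (fun x : ℝ => -(s * x)) atTop atBot := by
      apply tendsto_neg_atTop_atBot.comp
      exact (tendsto_id.const_mul_atTop hs)
    have := ((Real.tendsto_exp_atBot.comp h1).neg).div_const s
    simpa using this
  have hint : IntegrableOn (fun x : ℝ => Real.exp (-(s * x))) (Set.Ioi 0) := by
    have := exp_neg_integrableOn_Ioi 0 hs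
    apply this.congr_fun _ measurableSet_Ioi
    intro x _; simp [neg_mul]
  have := integral_Ioi_of_hasDerivAt_of_tendsto' hderiv hint htend
  rw [this]; simp [div_eq_mul_inv]

lemma sum_h_le (m : ℕ) (hm : 1 ≤ m) {s : ℝ} (hs : 0 < s) :
    s * ∑ j ∈ Finset.range m, (j : ℝ) * Real.exp (-(j:ℝ) ^ 2 / (2 * m) - s * j)
      ≤ Real.sqrt m * fMills (s * Real.sqrt m) + 1 := by
  set g : ℝ → ℝ := fun x => (x + 1) * Real.exp (-x ^ 2 / (2 * m) - s * x) with hg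
  have hgc : Continuous g := by unfold g; continuity
  have hgnn : ∀ x : ℝ, 0 ≤ x → 0 ≤ g x := by
    intro x hx; unfold g; positivity
  -- step bound
  have step : ∀ i : ℕ, ((i:ℝ) + 1) * Real.exp (-((i:ℝ) + 1) ^ 2 / (2 * m) - s * ((i:ℝ) + 1))
      ≤ ∫ x in (i:ℝ)..((i:ℝ)+1), g x := by
    intro i
    have hle : (i:ℝ) ≤ (i:ℝ) + 1 := by linarith
    have hconst : ((i:ℝ) + 1) * Real.exp (-((i:ℝ) + 1) ^ 2 / (2 * m) - s * ((i:ℝ) + 1))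
        = ∫ _x in (i:ℝ)..((i:ℝ)+1), (((i:ℝ) + 1) * Real.exp (-((i:ℝ) + 1) ^ 2 / (2 * m) - s * ((i:ℝ) + 1))) := by
      rw [intervalIntegral.integral_const]
      simp
    rw [hconst]
    apply intervalIntegral.integral_mono_on hle (intervalIntegrable_const)
      (hgc.intervalIntegrable _ _)
    intro x hx
    obtain ⟨hx1, hx2⟩ := hx
    have hx0 : 0 ≤ x := le_trans (Nat.cast_nonneg i) hx1
    unfold g
    apply mul_le_mul (by linarith) _ (exp_pos _).le (by linarith)
    apply Real.exp_le_exp.2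
    have hmpos : (0:ℝ) < 2 * m := by positivity
    have hsq : x ^ 2 ≤ ((i:ℝ) + 1) ^ 2 := by nlinarith
    have := mul_nonneg hs.le (sub_nonneg.2 hx2)
    have h2 : -((i:ℝ)+1) ^ 2 / (2 * m) ≤ -x ^ 2 / (2 * m) := by
      rw [div_eq_mul_inv, div_eq_mul_inv]
      exact mul_le_mul_of_nonneg_right (by linarith) (by positivity)
    linarith
  -- integrability of g on Ioi 0
  have hgint : IntegrableOn g (Set.Ioi 0) := by
    have h2 : IntegrableOn (fun x : ℝ => x * Real.exp (-x ^ 2 / (2 * m) - s * x)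
        + Real.exp (-x ^ 2 / (2 * m) - s * x)) (Set.Ioi 0) :=
      (integrableOn_mul_expquadm hm hs.le).add (integrableOn_expquadm hm hs.le)
    apply h2.congr_fun _ measurableSet_Ioi
    intro x _; unfold g; ring
  -- the sum over range m
  obtain ⟨n, rfl⟩ : ∃ n, m = n + 1 := ⟨m - 1, (Nat.succ_pred_eq_of_pos hm).symm⟩
  rw [Finset.sum_range_succ']
  simp only [Nat.cast_zero, zero_mul, add_zero]
  have hstep2 : ∀ i ∈ Finset.range n,
      ((i + 1 : ℕ) : ℝ) * Real.exp (-((i + 1 : ℕ) : ℝ) ^ 2 / (2 * ((n+1:ℕ):ℝ)) - s * ((i + 1 : ℕ) : ℝ))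
        ≤ ∫ x in (i:ℝ)..((i:ℝ)+1), g x := by
    intro i _
    have h := step i
    push_cast at h ⊢
    exact h
  have htel : ∑ i ∈ Finset.range n, ∫ x in (i:ℝ)..((i:ℝ)+1), g x
      = ∫ x in (0:ℝ)..(n:ℝ), g x := by
    have h := intervalIntegral.sum_integral_adjacent_intervals (a := fun i : ℕ => (i:ℝ)) (n := n)
      (f := g) (μ := volume) (fun i _ => hgc.intervalIntegrable _ _)
    simp only [Nat.cast_zero] at h
    rw [← h]
    apply Finset.sum_congr rfl
    intro i _
    congr 1
    push_cast
    ring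
  have hmono : ∫ x in (0:ℝ)..(n:ℝ), g x ≤ ∫ x in Set.Ioi (0:ℝ), g x := by
    rw [intervalIntegral.integral_of_le (Nat.cast_nonneg n)]
    apply setIntegral_mono_set hgint
    · filter_upwards [ae_restrict_mem measurableSet_Ioi] with x hx
      exact hgnn x (le_of_lt hx)
    · exact (Set.Ioc_subset_Ioi_self).eventuallyLE
  have hsplit : ∫ x in Set.Ioi (0:ℝ), g x
      = (∫ x in Set.Ioi (0:ℝ), x * Real.exp (-x ^ 2 / (2 * ((n+1:ℕ):ℝ)) - s * x))
        + ∫ x in Set.Ioi (0:ℝ), Real.exp (-x ^ 2 / (2 * ((n+1:ℕ):ℝ)) - s * x) := by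
    rw [← integral_add (integrableOn_mul_expquadm hm hs.le) (integrableOn_expquadm hm hs.le)]
    apply setIntegral_congr_fun measurableSet_Ioi
    intro x _; unfold g; ring
  have htail : s * ∫ x in Set.Ioi (0:ℝ), Real.exp (-x ^ 2 / (2 * ((n+1:ℕ):ℝ)) - s * x) ≤ 1 := by
    have hmono2 : ∫ x in Set.Ioi (0:ℝ), Real.exp (-x ^ 2 / (2 * ((n+1:ℕ):ℝ)) - s * x)
        ≤ ∫ x in Set.Ioi (0:ℝ), Real.exp (-(s * x)) := by
      apply setIntegral_mono_on (integrableOn_expquadm hm hs.le) _ measurableSet_Ioi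
      · intro x hx
        apply Real.exp_le_exp.2
        have h0 : -x ^ 2 / (2 * ((n+1:ℕ):ℝ)) = -(x ^ 2 / (2 * ((n+1:ℕ):ℝ))) := neg_div _ _
        have h1 : 0 ≤ x ^ 2 / (2 * ((n+1:ℕ):ℝ)) := by positivity
        rw [h0]; linarith
      · have h2 := exp_neg_integrableOn_Ioi 0 hs
        apply h2.congr_fun _ measurableSet_Ioi
        intro x _; simp [neg_mul]
    calc s * ∫ x in Set.Ioi (0:ℝ), Real.exp (-x ^ 2 / (2 * ((n+1:ℕ):ℝ)) - s * x)
        ≤ s * ∫ x in Set.Ioi (0:ℝ), Real.exp (-(s * x)) :=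
          mul_le_mul_of_nonneg_left hmono2 hs.le
      _ = 1 := by rw [integral_exp_neg_smul hs]; field_simp
  have hscaled := integral_scaled (m := n + 1) hm hs.le
  calc s * ∑ i ∈ Finset.range n,
        ((i + 1 : ℕ) : ℝ) * Real.exp (-((i + 1 : ℕ):ℝ) ^ 2 / (2 * ((n+1:ℕ):ℝ)) - s * ((i + 1 : ℕ):ℝ))
      ≤ s * ∑ i ∈ Finset.range n, ∫ x in (i:ℝ)..((i:ℝ)+1), g x :=
        mul_le_mul_of_nonneg_left (Finset.sum_le_sum hstep2) hs.le
    _ = s * ∫ x in (0:ℝ)..(n:ℝ), g x := by rw [htel]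
    _ ≤ s * ∫ x in Set.Ioi (0:ℝ), g x := mul_le_mul_of_nonneg_left hmono hs.le
    _ = s * (∫ x in Set.Ioi (0:ℝ), x * Real.exp (-x ^ 2 / (2 * ((n+1:ℕ):ℝ)) - s * x))
        + s * ∫ x in Set.Ioi (0:ℝ), Real.exp (-x ^ 2 / (2 * ((n+1:ℕ):ℝ)) - s * x) := by
        rw [hsplit]; ring
    _ ≤ Real.sqrt ((n+1:ℕ):ℝ) * fMills (s * Real.sqrt ((n+1:ℕ):ℝ)) + 1 := by
        rw [← hscaled]
        linarith [htail]

section Comb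


lemma ckm_eq (m k : ℕ) : ckm m k = ((k:ℝ) + 1) * ((m.descFactorial k : ℝ) / (m:ℝ) ^ k) := by
  rw [ckm, Nat.descFactorial_eq_factorial_mul_choose]
  have : ((k+1).factorial : ℝ) = ((k:ℝ) + 1) * (k.factorial : ℝ) := by
    rw [Nat.factorial_succ]; push_cast; ring
  push_cast
  rw [this]
  ring

lemma q_nonneg (m k : ℕ) : 0 ≤ (m.descFactorial k : ℝ) / (m:ℝ) ^ k := by positivity

lemma q_le_one (m k : ℕ) (hm : 1 ≤ m) : (m.descFactorial k : ℝ) / (m:ℝ) ^ k ≤ 1 := by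
  have hm0 : (0:ℝ) < (m:ℝ) ^ k := by
    apply pow_pos; exact_mod_cast hm
  rw [div_le_one hm0]
  exact_mod_cast Nat.descFactorial_le_pow m k

lemma q_le_exp {m k : ℕ} (hm : 1 ≤ m) (hk : 1 ≤ k) (hkm : k ≤ m) :
    (m.descFactorial k : ℝ) / (m:ℝ) ^ k ≤ Real.exp (-((k:ℝ) - 1) ^ 2 / (2 * m)) := by
  have hm0 : (0:ℝ) < (m:ℝ) := by exact_mod_cast hm
  have hprod : (m.descFactorial k : ℝ) / (m:ℝ) ^ k
      = ∏ i ∈ Finset.range k, (((m:ℝ) - i) / m) := by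
    rw [Finset.prod_div_distrib, Finset.prod_const, Finset.card_range,
      Nat.descFactorial_eq_prod_range]
    congr 1
    push_cast
    apply Finset.prod_congr rfl
    intro i hi
    rw [Nat.cast_sub (le_trans (le_of_lt (Finset.mem_range.1 hi)) hkm)]
  rw [hprod]
  have h1 : ∏ i ∈ Finset.range k, (((m:ℝ) - i) / m)
      ≤ ∏ i ∈ Finset.range k, Real.exp (-(i:ℝ) / m) := by
    apply Finset.prod_le_prod
    · intro i hi
      have : (i:ℝ) ≤ m := by
        have := le_trans (le_of_lt (Finset.mem_range.1 hi)) hkm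
        exact_mod_cast this
      exact div_nonneg (by linarith) (le_of_lt hm0)
    · intro i hi
      have h2 : ((m:ℝ) - i) / m = 1 + (-(i:ℝ) / m) := by
        field_simp
        ring
      rw [h2]
      have := Real.add_one_le_exp (-(i:ℝ) / m)
      linarith
  have h2 : ∏ i ∈ Finset.range k, Real.exp (-(i:ℝ) / m)
      = Real.exp (∑ i ∈ Finset.range k, -(i:ℝ) / m) := (Real.exp_sum _ _).symm
  have hgauss : (∑ i ∈ Finset.range k, (i:ℝ)) = (k:ℝ) * ((k:ℝ) - 1) / 2 := by
    have h := Finset.sum_range_id_mul_two k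
    have h2 := congrArg (Nat.cast : ℕ → ℝ) h
    push_cast [Nat.cast_sub hk] at h2
    linarith
  have h3 : ∑ i ∈ Finset.range k, -(i:ℝ) / m = -((k:ℝ) * ((k:ℝ) - 1) / 2) / m := by
    rw [← Finset.sum_div, Finset.sum_neg_distrib, hgauss]
  have h4 : Real.exp (-((k:ℝ) * ((k:ℝ) - 1) / 2) / m) ≤ Real.exp (-((k:ℝ) - 1) ^ 2 / (2 * m)) := by
    apply Real.exp_le_exp.2
    rw [div_le_div_iff₀ hm0 (by positivity)]
    have hk1 : (1:ℝ) ≤ (k:ℝ) := by exact_mod_cast hk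
    nlinarith
  calc ∏ i ∈ Finset.range k, (((m:ℝ) - i) / m)
      ≤ ∏ i ∈ Finset.range k, Real.exp (-(i:ℝ) / m) := h1
    _ = Real.exp (∑ i ∈ Finset.range k, -(i:ℝ) / m) := h2
    _ = Real.exp (-((k:ℝ) * ((k:ℝ) - 1) / 2) / m) := by rw [h3]
    _ ≤ Real.exp (-((k:ℝ) - 1) ^ 2 / (2 * m)) := h4

end Comb

end Aux

open Filter Set in
/-- Upper bound on `B_m(s)`. -/
theorem Bm_upper_bound (m : ℕ) (hm : 1 ≤ m) (s : ℝ) (hs : s ∈ Set.Icc (0:ℝ) 1) :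
    Bm m s ≤ 3 + muMills * Real.sqrt (m : ℝ) := by
  obtain ⟨hs0, hs1⟩ := hs
  have hsqrt : (0:ℝ) ≤ Real.sqrt (m : ℝ) := Real.sqrt_nonneg _
  rcases eq_or_lt_of_le hs0 with rfl | hspos
  · rw [Bm, zero_mul]
    have := muMills_nonneg
    nlinarith
  -- now 0 < s
  have ht0 : 0 ≤ 1 - s := by linarith
  have ht1 : 1 - s ≤ 1 := by linarith
  -- termwise bound
  have hterm : ∀ k ∈ Finset.Icc 1 m, ckm m k * (1 - s) ^ k
      ≤ ((k:ℝ) - 1) * Real.exp (-((k:ℝ) - 1) ^ 2 / (2 * m) - s * ((k:ℝ) - 1))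
        + 2 * (1 - s) ^ k := by
    intro k hk
    obtain ⟨hk1, hkm⟩ := Finset.mem_Icc.1 hk
    have hk1' : (1:ℝ) ≤ (k:ℝ) := by exact_mod_cast hk1
    have htk : (0:ℝ) ≤ (1 - s) ^ k := pow_nonneg ht0 k
    rw [ckm_eq]
    set q := (m.descFactorial k : ℝ) / (m:ℝ) ^ k with hq
    have hqnn := q_nonneg m k
    have hsplit : ((k:ℝ) + 1) * q * (1 - s) ^ k
        = ((k:ℝ) - 1) * (q * (1 - s) ^ k) + 2 * (q * (1 - s) ^ k) := by ring
    rw [hsplit]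
    have hb1 : ((k:ℝ) - 1) * (q * (1 - s) ^ k)
        ≤ ((k:ℝ) - 1) * Real.exp (-((k:ℝ) - 1) ^ 2 / (2 * m) - s * ((k:ℝ) - 1)) := by
      apply mul_le_mul_of_nonneg_left _ (by linarith)
      have hexp1 : q ≤ Real.exp (-((k:ℝ) - 1) ^ 2 / (2 * m)) := q_le_exp hm hk1 hkm
      have hexp2 : (1 - s) ^ k ≤ Real.exp (-(s * ((k:ℝ) - 1))) := by
        calc (1 - s) ^ k ≤ Real.exp (-s) ^ k := by
              apply pow_le_pow_left₀ ht0
              have := Real.add_one_le_exp (-s)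
              linarith
          _ = Real.exp ((k:ℝ) * (-s)) := by rw [← Real.exp_nat_mul]
          _ ≤ Real.exp (-(s * ((k:ℝ) - 1))) := by
              apply Real.exp_le_exp.2
              nlinarith
      calc q * (1 - s) ^ k
          ≤ Real.exp (-((k:ℝ) - 1) ^ 2 / (2 * m)) * Real.exp (-(s * ((k:ℝ) - 1))) :=
            mul_le_mul hexp1 hexp2 htk (exp_pos _).le
        _ = Real.exp (-((k:ℝ) - 1) ^ 2 / (2 * m) - s * ((k:ℝ) - 1)) := by
            rw [← Real.exp_add, ← sub_eq_add_neg]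
    have hb2 : 2 * (q * (1 - s) ^ k) ≤ 2 * (1 - s) ^ k := by
      have := mul_le_of_le_one_left htk (q_le_one m k hm)
      linarith
    linarith
  -- sum bound
  rw [Bm]
  have hsum1 : ∑ k ∈ Finset.Icc 1 m, ckm m k * (1 - s) ^ k
      ≤ ∑ k ∈ Finset.Icc 1 m, (((k:ℝ) - 1) * Real.exp (-((k:ℝ) - 1) ^ 2 / (2 * m) - s * ((k:ℝ) - 1))
        + 2 * (1 - s) ^ k) := Finset.sum_le_sum hterm
  have hA : s * ∑ k ∈ Finset.Icc 1 m, ((k:ℝ) - 1) * Real.exp (-((k:ℝ) - 1) ^ 2 / (2 * m) - s * ((k:ℝ) - 1))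
      ≤ muMills * Real.sqrt (m:ℝ) + 1 := by
    have hre : ∑ k ∈ Finset.Icc 1 m, ((k:ℝ) - 1) * Real.exp (-((k:ℝ) - 1) ^ 2 / (2 * m) - s * ((k:ℝ) - 1))
        = ∑ j ∈ Finset.range m, (j : ℝ) * Real.exp (-(j:ℝ) ^ 2 / (2 * m) - s * j) := by
      rw [← Finset.Ico_add_one_right_eq_Icc, Finset.sum_Ico_eq_sum_range]
      apply Finset.sum_congr (by norm_num)
      intro i _
      push_cast
      ring_nf
    rw [hre]
    have h1 := sum_h_le m hm hspos
    have h2 : fMills (s * Real.sqrt (m:ℝ)) ≤ muMills :=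
      fMills_le_muMills (mul_nonneg hs0 hsqrt)
    have h3 : Real.sqrt (m:ℝ) * fMills (s * Real.sqrt (m:ℝ)) ≤ Real.sqrt (m:ℝ) * muMills :=
      mul_le_mul_of_nonneg_left h2 hsqrt
    calc s * ∑ j ∈ Finset.range m, (j : ℝ) * Real.exp (-(j:ℝ) ^ 2 / (2 * m) - s * j)
        ≤ Real.sqrt (m:ℝ) * fMills (s * Real.sqrt (m:ℝ)) + 1 := h1
      _ ≤ Real.sqrt (m:ℝ) * muMills + 1 := by linarith
      _ = muMills * Real.sqrt (m:ℝ) + 1 := by ring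
  have hB : s * ∑ k ∈ Finset.Icc 1 m, (1 - s) ^ k ≤ 1 := by
    have hsub : ∑ k ∈ Finset.Icc 1 m, (1 - s) ^ k ≤ ∑ k ∈ Finset.range (m+1), (1 - s) ^ k := by
      apply Finset.sum_le_sum_of_subset_of_nonneg
      · intro k hk
        rw [Finset.mem_range]
        exact Nat.lt_succ_of_le (Finset.mem_Icc.1 hk).2
      · intro k _ _
        exact pow_nonneg ht0 k
    have hgeom : s * ∑ k ∈ Finset.range (m+1), (1 - s) ^ k = 1 - (1 - s) ^ (m+1) := by
      have hg := geom_sum_mul (1 - s) (m+1)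
      linear_combination (-1 : ℝ) * hg
    have hpow : (0:ℝ) ≤ (1 - s) ^ (m+1) := pow_nonneg ht0 _
    calc s * ∑ k ∈ Finset.Icc 1 m, (1 - s) ^ k
        ≤ s * ∑ k ∈ Finset.range (m+1), (1 - s) ^ k :=
          mul_le_mul_of_nonneg_left hsub hs0
      _ = 1 - (1 - s) ^ (m+1) := hgeom
      _ ≤ 1 := by linarith
  calc s * ∑ k ∈ Finset.Icc 1 m, ckm m k * (1 - s) ^ k
      ≤ s * ∑ k ∈ Finset.Icc 1 m, (((k:ℝ) - 1) * Real.exp (-((k:ℝ) - 1) ^ 2 / (2 * m) - s * ((k:ℝ) - 1))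
        + 2 * (1 - s) ^ k) := mul_le_mul_of_nonneg_left hsum1 hspos.le
    _ = s * ∑ k ∈ Finset.Icc 1 m, ((k:ℝ) - 1) * Real.exp (-((k:ℝ) - 1) ^ 2 / (2 * m) - s * ((k:ℝ) - 1))
        + 2 * (s * ∑ k ∈ Finset.Icc 1 m, (1 - s) ^ k) := by
        rw [Finset.sum_add_distrib, ← Finset.mul_sum]
        ring
    _ ≤ (muMills * Real.sqrt (m:ℝ) + 1) + 2 * 1 := by
        have := mul_le_mul_of_nonneg_left hB (by norm_num : (0:ℝ) ≤ 2)
        linarith [hA]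
    _ = 3 + muMills * Real.sqrt (m:ℝ) := by ring
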